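/- arXiv:1506.07389 — 8 statements merged into one kernel-verified Lean document; each statement's English description precedes it below -/
import Mathlib

section
/- Let G be a compact abelian group with dual group Γ and let E ⊆ Γ. Then κ(E) = |1 − e^{iα(E)}|, where κ(E) is the Kronecker constant of E and α(E) is the angular Kronecker constant of E. -/
open Complex
open scoped Real

/-- Distance between two real numbers measured modulo `2π`, i.e. as distance
on the circle `ℝ/2πℤ`; it takes values in `[0, π]`. -/
noncomputable def angDist (a b : ℝ) : ℝ := |((a - b : ℝ) : Real.Angle).toReal|

lemma key1 (a b : ℝ) :
    ‖Complex.exp ((a:ℂ)*I) - Complex.exp ((b:ℂ)*I)‖ = 2 * |Real.sin ((a-b)/2)| := by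
  have h1 : Complex.exp ((a:ℂ)*I) - Complex.exp ((b:ℂ)*I)
      = Complex.exp ((((a+b)/2 : ℝ):ℂ)*I) * (2 * Complex.sin (((a-b)/2 : ℝ):ℂ) * I) := by
    have e1 : ((a:ℂ)) * I = (((a+b)/2 : ℝ):ℂ)*I + (((a-b)/2 : ℝ):ℂ)*I := by push_cast; ring
    have e2 : ((b:ℂ)) * I = (((a+b)/2 : ℝ):ℂ)*I + -(((a-b)/2 : ℝ):ℂ)*I := by push_cast; ring
    rw [e1, e2, Complex.exp_add, Complex.exp_add, Complex.sin]
    linear_combination (Complex.exp ((((a+b)/2:ℝ):ℂ)*I) *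
      (Complex.exp ((((a-b)/2:ℝ):ℂ)*I) - Complex.exp (-(((a-b)/2:ℝ):ℂ)*I))) * Complex.I_sq
  rw [h1, norm_mul, norm_mul, norm_mul, Complex.norm_exp_ofReal_mul_I, Complex.norm_I,
    ← Complex.ofReal_sin, Complex.norm_real, Real.norm_eq_abs, Complex.norm_two]
  ring

lemma key2 (a b : ℝ) : |Real.sin ((a-b)/2)| = Real.sin (angDist a b / 2) := by
  set θ := ((a-b : ℝ) : Real.Angle).toReal with hθ
  have hcoe : ((a-b : ℝ) : Real.Angle) = ((θ:ℝ) : Real.Angle) := (Real.Angle.coe_toReal _).symm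
  obtain ⟨k, hk⟩ := Real.Angle.angle_eq_iff_two_pi_dvd_sub.mp hcoe
  have hsplit : (a-b)/2 = θ/2 + (k:ℝ) * π := by linarith
  have hAD : angDist a b = |θ| := rfl
  have hθpi : θ ≤ π := Real.Angle.toReal_le_pi _
  have hθnp : -π < θ := Real.Angle.neg_pi_lt_toReal _
  have h4 : |((-1:ℝ))^k| = 1 := by
    rcases Int.even_or_odd k with he | ho
    · rw [he.neg_one_zpow, abs_one]
    · rw [Odd.neg_one_zpow ho, _root_.abs_neg, abs_one]
  rw [hsplit, Real.sin_add_int_mul_pi, abs_mul, h4, one_mul, hAD]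
  rcases abs_cases θ with ⟨h1, h2⟩ | ⟨h1, h2⟩
  · rw [h1]
    exact abs_of_nonneg (Real.sin_nonneg_of_nonneg_of_le_pi (by linarith) (by linarith))
  · have h3 : |θ|/2 = -(θ/2) := by rw [h1]; ring
    have hs : 0 ≤ Real.sin (-(θ/2)) :=
      Real.sin_nonneg_of_nonneg_of_le_pi (by linarith) (by linarith)
    rw [Real.sin_neg] at hs
    rw [h3, Real.sin_neg, abs_of_nonpos (by linarith)]

lemma expDist (a b : ℝ) :
    ‖Complex.exp ((a:ℂ)*I) - Complex.exp ((b:ℂ)*I)‖ = 2 * Real.sin (angDist a b / 2) := by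
  rw [key1, key2]

lemma angDist_nonneg (a b : ℝ) : 0 ≤ angDist a b := abs_nonneg _
lemma angDist_le_pi (a b : ℝ) : angDist a b ≤ π := Real.Angle.abs_toReal_le_pi _

lemma f_eq {t : ℝ} (h0 : 0 ≤ t) (hπ : t ≤ π) :
    ‖1 - Complex.exp ((t:ℂ) * I)‖ = 2 * Real.sin (t/2) := by
  have h1 : (1:ℂ) = Complex.exp (((0:ℝ):ℂ) * I) := by
    norm_num
  rw [h1, key1]
  have : (0 - t)/2 = -(t/2) := by ring
  rw [this, Real.sin_neg, abs_neg,
    _root_.abs_of_nonneg (Real.sin_nonneg_of_nonneg_of_le_pi (by linarith) (by linarith))]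

lemma circle_eq_exp (z : Circle) : (z:ℂ) = Complex.exp ((Complex.arg (z:ℂ) : ℂ) * I) := by
  have h := Complex.norm_mul_exp_arg_mul_I (z:ℂ)
  rw [Circle.norm_coe] at h
  simpa using h.symm

lemma circle_rep (z : Circle) :
    ∃ θ : ℝ, θ ∈ Set.Ico 0 (2*π) ∧ (z:ℂ) = Complex.exp ((θ:ℂ) * I) := by
  have hle := Complex.arg_le_pi (z:ℂ)
  have hlt := Complex.neg_pi_lt_arg (z:ℂ)
  have hπ := Real.pi_pos
  by_cases h : 0 ≤ Complex.arg (z:ℂ)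
  · exact ⟨_, ⟨h, by linarith⟩, circle_eq_exp z⟩
  · refine ⟨Complex.arg (z:ℂ) + 2*π, ⟨by linarith, by linarith⟩, ?_⟩
    have h2 : Complex.exp ((↑(Complex.arg (z:ℂ) + 2*π))*I) = Complex.exp ((Complex.arg (z:ℂ) : ℂ)*I) := by
      push_cast
      rw [add_mul, Complex.exp_add, Complex.exp_two_pi_mul_I, mul_one]
    rw [h2]
    exact circle_eq_exp z

lemma two_sin_mono {s t : ℝ} (hs : 0 ≤ s) (ht : t ≤ π) (hst : s ≤ t) :
    2 * Real.sin (s/2) ≤ 2 * Real.sin (t/2) := by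
  have h := Real.sin_le_sin_of_le_of_le_pi_div_two (x := s/2) (y := t/2)
    (by linarith [Real.pi_pos]) (by linarith) (by linarith)
  linarith

lemma sin_lip (x y : ℝ) : |Real.sin x - Real.sin y| ≤ |x - y| := by
  rw [Real.sin_sub_sin]
  calc |2 * Real.sin ((x-y)/2) * Real.cos ((x+y)/2)|
      = 2 * |Real.sin ((x-y)/2)| * |Real.cos ((x+y)/2)| := by
        rw [abs_mul, abs_mul]; norm_num
    _ ≤ 2 * |(x-y)/2| * 1 := by
        have h1 : |Real.sin ((x-y)/2)| ≤ |(x-y)/2| := Real.abs_sin_le_abs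
        have h2 : |Real.cos ((x+y)/2)| ≤ 1 := Real.abs_cos_le_one _
        nlinarith [abs_nonneg (Real.sin ((x-y)/2)), abs_nonneg (Real.cos ((x+y)/2)),
          abs_nonneg ((x-y)/2)]
    _ = |x - y| := by rw [abs_div, _root_.abs_two]; ring

/-- The Kronecker constant `κ(E)` of a set of characters. -/
noncomputable def kroneckerConstant {G : Type*} [CommGroup G] [TopologicalSpace G]
    (E : Set (ContinuousMonoidHom G Circle)) : ℝ :=
  sInf {ε : ℝ | 0 ≤ ε ∧ ∀ φ : ContinuousMonoidHom G Circle → Circle,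
    ∃ x : G, ∀ γ ∈ E, ‖(φ γ : ℂ) - (γ x : ℂ)‖ < ε}

/-- The angular Kronecker constant `α(E)`: the infimum of `ε ≥ 0` such that every
`[0, 2π)`-valued function on `E` can be approximated within `ε` (mod `2π`) by the
argument of a character evaluation. -/
noncomputable def angularKroneckerConstant {G : Type*} [CommGroup G] [TopologicalSpace G]
    (E : Set (ContinuousMonoidHom G Circle)) : ℝ :=
  sInf {ε : ℝ | 0 ≤ ε ∧ ∀ φ : ContinuousMonoidHom G Circle → ℝ,
    (∀ γ ∈ E, φ γ ∈ Set.Ico 0 (2 * π)) →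
      ∃ x : G, ∀ γ ∈ E, angDist (φ γ) (Complex.arg (γ x : ℂ)) ≤ ε}

theorem stmt2 {G : Type*} [CommGroup G] [TopologicalSpace G] [IsTopologicalGroup G]
    [CompactSpace G] (E : Set (ContinuousMonoidHom G Circle)) :
    kroneckerConstant E
      = ‖1 - Complex.exp ((angularKroneckerConstant E : ℂ) * Complex.I)‖ := by
  classical
  have hπ := Real.pi_pos
  set Sk : Set ℝ := {ε : ℝ | 0 ≤ ε ∧ ∀ φ : ContinuousMonoidHom G Circle → Circle,
    ∃ x : G, ∀ γ ∈ E, ‖(φ γ : ℂ) - (γ x : ℂ)‖ < ε} with hSk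
  set Sa : Set ℝ := {ε : ℝ | 0 ≤ ε ∧ ∀ φ : ContinuousMonoidHom G Circle → ℝ,
    (∀ γ ∈ E, φ γ ∈ Set.Ico 0 (2 * π)) →
      ∃ x : G, ∀ γ ∈ E, angDist (φ γ) (Complex.arg (γ x : ℂ)) ≤ ε} with hSa
  have hκ : kroneckerConstant E = sInf Sk := rfl
  have hA' : angularKroneckerConstant E = sInf Sa := rfl
  set A := angularKroneckerConstant E with hAdef
  have hbdk : BddBelow Sk := ⟨0, fun x hx => hx.1⟩
  have hbda : BddBelow Sa := ⟨0, fun x hx => hx.1⟩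
  have hSaπ : π ∈ Sa := ⟨hπ.le, fun φ _ => ⟨1, fun γ _ => angDist_le_pi _ _⟩⟩
  have hSk3 : (3:ℝ) ∈ Sk := by
    refine ⟨by norm_num, fun φ => ⟨1, fun γ _ => ?_⟩⟩
    have hn := norm_sub_le ((φ γ : ℂ)) ((γ 1 : ℂ))
    simp only [Circle.norm_coe] at hn
    linarith
  have hA0 : 0 ≤ A := by
    rw [hA', hSa]; exact le_csInf ⟨π, hSaπ⟩ (fun b hb => hb.1)
  have hAπ : A ≤ π := by
    rw [hA', hSa]; exact csInf_le hbda hSaπ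
  rw [hκ, f_eq hA0 hAπ]
  have hsinA : 0 ≤ Real.sin (A/2) :=
    Real.sin_nonneg_of_nonneg_of_le_pi (by linarith) (by linarith)
  apply le_antisymm
  · -- sInf Sk ≤ 2 sin(A/2)
    apply le_of_forall_pos_le_add
    intro δ hδ
    refine csInf_le hbdk ?_
    obtain ⟨d0, hd0S, hd0lt⟩ : ∃ d0 ∈ Sa, d0 < A + δ/2 := by
      refine (csInf_lt_iff hbda ⟨π, hSaπ⟩).mp ?_
      rw [← hA']
      linarith
    set d := min d0 π with hd
    have hdS : d ∈ Sa := by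
      refine ⟨le_min hd0S.1 hπ.le, fun φ hφ => ?_⟩
      obtain ⟨x, hx⟩ := hd0S.2 φ hφ
      exact ⟨x, fun γ hγ => le_min (hx γ hγ) (angDist_le_pi _ _)⟩
    have hdA : A ≤ d := by
      refine le_min ?_ hAπ
      rw [hA', hSa]; exact csInf_le hbda hd0S
    have hdub : d ≤ A + δ/2 := le_trans (min_le_left _ _) hd0lt.le
    have hdπ : d ≤ π := min_le_right _ _
    have hlip : 2 * Real.sin (d/2) ≤ 2 * Real.sin (A/2) + δ/2 := by
      have h1 := le_abs_self (Real.sin (d/2) - Real.sin (A/2))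
      have h2 := sin_lip (d/2) (A/2)
      have h3 : |d/2 - A/2| = d/2 - A/2 := abs_of_nonneg (by linarith)
      linarith
    refine ⟨by linarith, fun ψ => ?_⟩
    choose θf hθf hrep using fun γ : ContinuousMonoidHom G Circle => circle_rep (ψ γ)
    obtain ⟨x, hx⟩ := hdS.2 θf (fun γ _ => hθf γ)
    refine ⟨x, fun γ hγ => ?_⟩
    rw [hrep γ, circle_eq_exp (γ x), expDist]
    have h7 := two_sin_mono (angDist_nonneg (θf γ) (Complex.arg ((γ x : Circle) : ℂ))) hdπ
      (hx γ hγ)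
    linarith
  · -- 2 sin(A/2) ≤ sInf Sk
    refine le_csInf ⟨3, hSk3⟩ (fun ε hε => ?_)
    obtain ⟨hε0, hεP⟩ := hε
    by_cases h2 : 2 ≤ ε
    · have h1 := Real.sin_le_one (A/2)
      linarith
    · push_neg at h2
      set d := 2 * Real.arcsin (ε/2) with hd
      have harc1 : 0 ≤ Real.arcsin (ε/2) := Real.arcsin_nonneg.mpr (by linarith)
      have harc2 : Real.arcsin (ε/2) ≤ π/2 := Real.arcsin_le_pi_div_two _
      have hsin : Real.sin (Real.arcsin (ε/2)) = ε/2 := Real.sin_arcsin (by linarith) (by linarith)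
      have hd2 : d/2 = Real.arcsin (ε/2) := by rw [hd]; ring
      have hdS : d ∈ Sa := by
        refine ⟨by linarith, fun φ hφ => ?_⟩
        obtain ⟨x, hx⟩ := hεP (fun γ => Circle.exp (φ γ))
        refine ⟨x, fun γ hγ => ?_⟩
        have h6 := hx γ hγ
        rw [Circle.coe_exp, circle_eq_exp (γ x), expDist] at h6
        by_contra hcon
        push_neg at hcon
        have h7 := two_sin_mono (by linarith : (0:ℝ) ≤ d)
          (angDist_le_pi (φ γ) (Complex.arg ((γ x : Circle) : ℂ))) hcon.le
        rw [hd2, hsin] at h7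
        linarith
      have hAd : A ≤ d := by rw [hA', hSa]; exact csInf_le hbda hdS
      have h8 := two_sin_mono hA0 (show d ≤ π by linarith) hAd
      rw [hd2, hsin] at h8
      linarith
end

section
/- Let Γ = ℤ₂ ⊕ ℤ₂ ⊕ ℤ₂ with standard basis vectors e₁, e₂, e₃, regarded as the dual group of the compact group G = ℤ₂ ⊕ ℤ₂ ⊕ ℤ₂ via the pairing γ(g) = (−1)^{γ₁g₁ + γ₂g₂ + γ₃g₃}. Then the set E = {e₂, e₃, e₁+e₂, e₁+e₃} has Kronecker constant κ(E) = 2. -/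
open Complex
open scoped Real

/-- The pairing of `Γ = ℤ₂ ⊕ ℤ₂ ⊕ ℤ₂` with `G = ℤ₂ ⊕ ℤ₂ ⊕ ℤ₂`:
`γ(g) = (−1)^(γ₁g₁ + γ₂g₂ + γ₃g₃)`. -/
def chi (γ g : ZMod 2 × ZMod 2 × ZMod 2) : ℂ :=
  (-1 : ℂ) ^ ((γ.1 * g.1 + γ.2.1 * g.2.1 + γ.2.2 * g.2.2).val)

/-- The Kronecker constant of `E ⊆ ℤ₂ ⊕ ℤ₂ ⊕ ℤ₂` (viewed as the dual of
`G = ℤ₂ ⊕ ℤ₂ ⊕ ℤ₂` via the pairing `chi`). -/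
noncomputable def kappaZ2 (E : Set (ZMod 2 × ZMod 2 × ZMod 2)) : ℝ :=
  sInf {ε : ℝ | 0 ≤ ε ∧ ∀ φ : (ZMod 2 × ZMod 2 × ZMod 2) → ℂ,
    (∀ γ ∈ E, ‖φ γ‖ = 1) →
      ∃ x : ZMod 2 × ZMod 2 × ZMod 2, ∀ γ ∈ E, ‖φ γ - chi γ x‖ < ε}

lemma key9 (x : ZMod 2 × ZMod 2 × ZMod 2) :
    chi (0,1,0) x = -1 ∨ chi (0,0,1) x = -1 ∨ chi (1,1,0) x = -1 ∨ chi (1,0,1) x = 1 := by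
  obtain ⟨a, b, c⟩ := x
  fin_cases a <;> fin_cases b <;> fin_cases c <;> simp [chi] <;>
    norm_num [show ((1:ZMod 2)).val = 1 from rfl, show ((2:ZMod 2)).val = 0 from rfl] <;>
    simp (config := {decide := true}) [ZMod.val]

theorem stmt9 :
    kappaZ2 {(0, 1, 0), (0, 0, 1), (1, 1, 0), (1, 0, 1)} = 2 := by
  have hset : {ε : ℝ | 0 ≤ ε ∧ ∀ φ : (ZMod 2 × ZMod 2 × ZMod 2) → ℂ,
      (∀ γ ∈ ({(0, 1, 0), (0, 0, 1), (1, 1, 0), (1, 0, 1)} :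
        Set (ZMod 2 × ZMod 2 × ZMod 2)), ‖φ γ‖ = 1) →
      ∃ x : ZMod 2 × ZMod 2 × ZMod 2,
        ∀ γ ∈ ({(0, 1, 0), (0, 0, 1), (1, 1, 0), (1, 0, 1)} :
          Set (ZMod 2 × ZMod 2 × ZMod 2)), ‖φ γ - chi γ x‖ < ε}
      = Set.Ioi 2 := by
    ext ε
    simp only [Set.mem_setOf_eq, Set.mem_Ioi]
    constructor
    · rintro ⟨hε0, h⟩
      set φ : (ZMod 2 × ZMod 2 × ZMod 2) → ℂ :=
        fun γ => if γ = (1,0,1) then -1 else 1 with hφdef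
      obtain ⟨x, hx⟩ := h φ (by
        intro γ hγ
        by_cases hc : γ = (1,0,1) <;> simp [hφdef, hc])
      rcases key9 x with hk | hk | hk | hk
      · have := hx (0,1,0) (by simp)
        rw [hk] at this
        simp [hφdef] at this
        norm_num at this
        linarith
      · have := hx (0,0,1) (by simp)
        rw [hk] at this
        simp [hφdef] at this
        norm_num at this
        linarith
      · have := hx (1,1,0) (by simp)
        rw [hk] at this
        simp [hφdef] at this
        norm_num at this
        linarith
      · have := hx (1,0,1) (by simp)
        rw [hk] at this
        simp [hφdef] at this
        norm_num at this
        linarith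
    · intro hε
      refine ⟨by linarith, ?_⟩
      intro φ hφ
      refine ⟨(0,0,0), ?_⟩
      intro γ hγ
      have h1 : ‖φ γ‖ = 1 := hφ γ hγ
      have h2 : chi γ (0,0,0) = 1 := by simp [chi]
      rw [h2]
      calc ‖φ γ - 1‖ ≤ ‖φ γ‖ + ‖(1:ℂ)‖ := by
            exact norm_sub_le _ _
        _ = 2 := by rw [h1]; norm_num
        _ < ε := hε
  unfold kappaZ2
  rw [hset]
  exact csInf_Ioi
end

section
/- Let Γ = ℤ₂ ⊕ ℤ₂ ⊕ ℤ₂ with standard basis vectors e₁, e₂, e₃, regarded as the dual group of the compact group G = ℤ₂ ⊕ ℤ₂ ⊕ ℤ₂ via the pairing γ(g) = (−1)^{γ₁g₁ + γ₂g₂ + γ₃g₃}, and let E = {e₂, e₃, e₁+e₂, e₁+e₃}. Then for every even integer n ≥ 2, κ_n(E) = 2. -/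
open Complex
open scoped Real

/-- `κₙ(E)` for `E ⊆ ℤ₂ ⊕ ℤ₂ ⊕ ℤ₂` (viewed as the dual of `G = ℤ₂ ⊕ ℤ₂ ⊕ ℤ₂` via the
pairing `chi`): the infimum of `ε ≥ 0` such that every function from `E` into the
`n`-th roots of unity can be approximated within `ε` by a character evaluation. -/
noncomputable def kappaNZ2 (n : ℕ) (E : Set (ZMod 2 × ZMod 2 × ZMod 2)) : ℝ :=
  sInf {ε : ℝ | 0 ≤ ε ∧ ∀ φ : (ZMod 2 × ZMod 2 × ZMod 2) → ℂ,
    (∀ γ ∈ E, (φ γ) ^ n = 1) →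
      ∃ x : ZMod 2 × ZMod 2 × ZMod 2, ∀ γ ∈ E, ‖φ γ - chi γ x‖ < ε}

theorem stmt10 (n : ℕ) (hn : 2 ≤ n) (heven : Even n) :
    kappaNZ2 n {(0, 1, 0), (0, 0, 1), (1, 1, 0), (1, 0, 1)} = 2 := by
  have hset : {ε : ℝ | 0 ≤ ε ∧ ∀ φ : (ZMod 2 × ZMod 2 × ZMod 2) → ℂ,
      (∀ γ ∈ ({(0, 1, 0), (0, 0, 1), (1, 1, 0), (1, 0, 1)} :
        Set (ZMod 2 × ZMod 2 × ZMod 2)), (φ γ) ^ n = 1) →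
      ∃ x : ZMod 2 × ZMod 2 × ZMod 2,
        ∀ γ ∈ ({(0, 1, 0), (0, 0, 1), (1, 1, 0), (1, 0, 1)} :
          Set (ZMod 2 × ZMod 2 × ZMod 2)), ‖φ γ - chi γ x‖ < ε}
      = Set.Ioi 2 := by
    ext ε
    simp only [Set.mem_setOf_eq, Set.mem_Ioi]
    constructor
    · rintro ⟨hε0, h⟩
      by_contra hle
      push_neg at hle
      set φ : (ZMod 2 × ZMod 2 × ZMod 2) → ℂ :=
        fun γ => if γ = (1, 0, 1) then -1 else 1 with hφdef
      have hroot : ∀ γ ∈ ({(0, 1, 0), (0, 0, 1), (1, 1, 0), (1, 0, 1)} :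
          Set (ZMod 2 × ZMod 2 × ZMod 2)), (φ γ) ^ n = 1 := by
        intro γ _
        by_cases hγ : γ = (1, 0, 1)
        · simp [hφdef, hγ, heven.neg_one_pow]
        · simp [hφdef, hγ]
      obtain ⟨x, hx⟩ := h φ hroot
      · obtain ⟨x1, x2, x3⟩ := x
        have h1 := hx (0, 1, 0) (by simp)
        have h2 := hx (0, 0, 1) (by simp)
        have h3 := hx (1, 1, 0) (by simp)
        have h4 := hx (1, 0, 1) (by simp)
        fin_cases x1 <;> fin_cases x2 <;> fin_cases x3 <;>
          simp +decide [hφdef, chi, Prod.ext_iff, show ZMod.val (1 : ZMod 2) = 1 from rfl,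
            show ZMod.val (2 : ZMod 2) = 0 from rfl, show (1 : ℂ) - -1 = 2 by ring,
            show (-1 : ℂ) - 1 = -2 by ring, norm_neg] at h1 h2 h3 h4 <;>
          norm_num [Complex.norm_two] at h1 h2 h3 h4 <;>
          linarith
    · intro h2
      refine ⟨by linarith, fun φ hφ => ⟨(0, 0, 0), fun γ hγ => ?_⟩⟩
      have habs : ‖φ γ‖ = 1 :=
        Complex.norm_eq_one_of_pow_eq_one (hφ γ hγ) (by omega)
      have hchi : ‖chi γ (0, 0, 0)‖ = 1 := by
        simp [chi]
      calc ‖φ γ - chi γ (0, 0, 0)‖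
          ≤ ‖φ γ‖ + ‖chi γ (0, 0, 0)‖ := by
            exact (norm_sub_le _ _)
        _ = 2 := by rw [habs, hchi]; norm_num
        _ < ε := h2
  rw [kappaNZ2, hset, csInf_Ioi]
end

section
/- Let Γ = ℤ₂ ⊕ ℤ₂ ⊕ ℤ₂ with standard basis vectors e₁, e₂, e₃, regarded as the dual group of the compact group G = ℤ₂ ⊕ ℤ₂ ⊕ ℤ₂ via the pairing γ(g) = (−1)^{γ₁g₁ + γ₂g₂ + γ₃g₃}, and let E = {e₂, e₃, e₁+e₂, e₁+e₃}. Then for every odd integer n ≥ 3, κ_n(E) ≥ |1 − e^{iπ(1−1/n)}|. -/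
open Complex
open scoped Real

theorem stmt11 (n : ℕ) (hn : 3 ≤ n) (hodd : Odd n) :
    ‖1 - Complex.exp (π * (1 - 1 / (n : ℂ)) * Complex.I)‖
      ≤ kappaNZ2 n {(0, 1, 0), (0, 0, 1), (1, 1, 0), (1, 0, 1)} := by
  set ω : ℂ := Complex.exp (π * (1 - 1 / (n : ℂ)) * Complex.I) with hωdef
  have hn0 : (n : ℂ) ≠ 0 := by
    exact_mod_cast Nat.cast_ne_zero.mpr (by omega)
  have habsω : ‖ω‖ = 1 := by
    rw [hωdef, Complex.norm_exp]
    norm_num [Complex.mul_re, Complex.mul_im, Complex.div_re, Complex.div_im]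
  have hc2 : ‖1 - ω‖ ≤ 2 := by
    calc ‖1 - ω‖ ≤ ‖1 - 0‖ + ‖0 - ω‖ :=
          norm_sub_le_norm_sub_add_norm_sub 1 0 ω
      _ = 2 := by rw [sub_zero, zero_sub, norm_one, norm_neg, habsω]; norm_num
  have hωn : ω ^ n = 1 := by
    rw [hωdef, ← Complex.exp_nat_mul]
    have h1 : (n : ℂ) * (π * (1 - 1 / (n : ℂ)) * Complex.I)
        = ((n - 1 : ℕ) : ℂ) * (π * Complex.I) := by
      have h1n : (1:ℕ) ≤ n := by omega
      push_cast [h1n]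
      field_simp
    rw [h1, Complex.exp_nat_mul, Complex.exp_pi_mul_I]
    exact (Nat.Odd.sub_odd hodd odd_one).neg_one_pow
  apply le_csInf
  · refine ⟨3, by norm_num, fun φ hφ => ⟨0, fun γ hγ => ?_⟩⟩
    have h1 : ‖φ γ‖ = 1 :=
      Complex.norm_eq_one_of_pow_eq_one (hφ γ hγ) (by omega)
    have h2 : chi γ 0 = 1 := by simp [chi]
    calc ‖φ γ - chi γ 0‖
        ≤ ‖φ γ - 0‖ + ‖0 - chi γ 0‖ := norm_sub_le_norm_sub_add_norm_sub _ 0 _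
      _ < 3 := by rw [sub_zero, zero_sub, norm_neg, h1, h2]; norm_num
  · rintro ε ⟨hε0, hε⟩
    set φ : (ZMod 2 × ZMod 2 × ZMod 2) → ℂ :=
      fun γ => if γ = (1, 0, 1) then ω else 1 with hφdef
    obtain ⟨x, hx⟩ := hε φ (by
      intro γ hγ
      by_cases h : γ = ((1:ZMod 2), (0:ZMod 2), (1:ZMod 2)) <;> simp [φ, h, hωn])
    obtain ⟨a, b, c⟩ := x
    have h2 : ∀ γ ∈ ({(0, 1, 0), (0, 0, 1), (1, 1, 0), (1, 0, 1)} :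
        Set (ZMod 2 × ZMod 2 × ZMod 2)), γ ≠ (1,0,1) → chi γ (a,b,c) = -1 →
        ‖1 - ω‖ ≤ ε := by
      intro γ hγ hne hchi
      have h := hx γ hγ
      rw [hchi] at h
      simp only [φ, if_neg hne] at h
      norm_num at h
      linarith
    fin_cases a <;> fin_cases b <;> fin_cases c
    · have h := hx (1,0,1) (by norm_num)
      simp only [φ, if_pos rfl] at h
      norm_num [chi, ZMod.val_one] at h
      rw [show (1 : ℂ) - ω = -(ω - 1) by ring, norm_neg]
      exact h.le
    · exact h2 (0,0,1) (by norm_num) (by decide) (by simp only [chi]; exact pow_one (-1 : ℂ))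
    · exact h2 (0,1,0) (by norm_num) (by decide) (by simp only [chi]; exact pow_one (-1 : ℂ))
    · exact h2 (0,1,0) (by norm_num) (by decide) (by simp only [chi]; exact pow_one (-1 : ℂ))
    · exact h2 (1,1,0) (by norm_num) (by decide) (by simp only [chi]; exact pow_one (-1 : ℂ))
    · exact h2 (1,1,0) (by norm_num) (by decide) (by simp only [chi]; exact pow_one (-1 : ℂ))
    · exact h2 (0,1,0) (by norm_num) (by decide) (by simp only [chi]; exact pow_one (-1 : ℂ))
    · exact h2 (0,1,0) (by norm_num) (by decide) (by simp only [chi]; exact pow_one (-1 : ℂ))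
end

section
/- Let G = 𝕋 × G₂, where G₂ = ∏_{k=1}^∞ {−1, +1} is the countable direct product of copies of the multiplicative two-element group, a compact abelian group. Its dual group is Γ = ℤ ⊕ Γ₂, where Γ₂ = ⊕_{k=1}^∞ ℤ₂, via the pairing (m, γ)(u, (g_k)) = u^m · ∏_k g_k^{γ_k}. Let e_k denote the character u ↦ u^k of 𝕋 and γ_k the projection onto the k-th ℤ₂ factor. Then the set E = {(e_k, γ_k) : k ≥ 1} ∪ {(e_k^{−1}, γ_k) : k ≥ 1} ⊆ Γ is a Sidon set. -/
open MeasureTheory Complex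

noncomputable instance : MeasurableSpace Circle := borel Circle
instance : MeasurableSpace (Units ℤ) := ⊤

/-- The integral of a function against a finite complex Borel measure,
via the Jordan decompositions of its real and imaginary parts. -/
noncomputable def cmIntegral {G : Type*} [MeasurableSpace G]
    (μ : MeasureTheory.ComplexMeasure G) (f : G → ℂ) : ℂ :=
  ((∫ x, f x ∂ μ.re.toJordanDecomposition.posPart)
      - (∫ x, f x ∂ μ.re.toJordanDecomposition.negPart))
    + Complex.I * ((∫ x, f x ∂ μ.im.toJordanDecomposition.posPart)
      - (∫ x, f x ∂ μ.im.toJordanDecomposition.negPart))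

/-- The compact abelian group `G = 𝕋 × ∏_{k=1}^∞ {−1, +1}`. -/
abbrev Gprod : Type := Circle × (ℕ → Units ℤ)

/-- The action of `(m, γ) ∈ ℤ ⊕ (⊕ₖ ℤ₂)` on `(u, (gₖ)) ∈ 𝕋 × ∏ₖ {−1, +1}`:
`(u, (gₖ)) ↦ u^m ∏ₖ gₖ^{γₖ}`. -/
noncomputable def chr (γ : ℤ × (ℕ →₀ ZMod 2)) (x : Gprod) : ℂ :=
  ((x.1 ^ γ.1 : Circle) : ℂ) * ∏ k ∈ γ.2.support, (((x.2 k : ℤ) : ℂ)) ^ ((γ.2 k).val)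

/-- The set `E = {(eₖ, γₖ) : k ≥ 1} ∪ {(eₖ⁻¹, γₖ) : k ≥ 1}`, i.e.
`{(k, bₖ) : k ≥ 1} ∪ {(−k, bₖ) : k ≥ 1} ⊆ ℤ ⊕ (⊕ₖ ℤ₂)`. -/
def Eset : Set (ℤ × (ℕ →₀ ZMod 2)) :=
  {γ | ∃ k : ℕ, 1 ≤ k ∧
    (γ = (((k : ℤ), Finsupp.single k (1 : ZMod 2)) : ℤ × (ℕ →₀ ZMod 2)) ∨
     γ = ((-(k : ℤ), Finsupp.single k (1 : ZMod 2)) : ℤ × (ℕ →₀ ZMod 2)))}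

instance : BorelSpace Circle := ⟨rfl⟩

/-- simplify chr at (n, single k 1) of x⁻¹ -/
lemma chr_single (n : ℤ) (k : ℕ) (x : Gprod) :
    chr (n, Finsupp.single k (1 : ZMod 2)) x⁻¹
      = ((x.1 ^ (-n) : Circle) : ℂ) * ((x.2 k : ℤ) : ℂ) := by
  have hsupp : (Finsupp.single k (1 : ZMod 2)).support = {k} :=
    Finsupp.support_single_ne_zero k one_ne_zero
  have hinv : (x⁻¹.2 k) = x.2 k := by
    have := Int.units_eq_one_or (x.2 k)
    rcases this with h | h <;> simp [h]
  simp only [chr, hsupp, Finset.prod_singleton, Finsupp.single_eq_same, ZMod.val_one,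
    pow_one, hinv]
  congr 1
  rw [zpow_neg, ← inv_zpow]
  rfl

noncomputable def mfun (a : ℂ) (k : ℕ) (s : ℝ) : ℝ :=
  (a * Complex.exp ((2 * Real.pi * k * s : ℝ) * Complex.I)).re

lemma mfun_cont (a : ℂ) (k : ℕ) : Continuous (mfun a k) := by
  unfold mfun; fun_prop

lemma mfun_mem (a : ℂ) (k : ℕ) (ha : ‖a‖ ≤ 1) (s : ℝ) :
    mfun a k s ∈ Set.Icc (-1 : ℝ) 1 := by
  have h : ‖a * Complex.exp ((2 * Real.pi * k * s : ℝ) * Complex.I)‖ ≤ 1 := by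
    rw [norm_mul, Complex.norm_exp_ofReal_mul_I]
    simpa using ha
  have := Complex.abs_re_le_norm (a * Complex.exp ((2 * Real.pi * k * s : ℝ) * Complex.I))
  have h2 := abs_le.1 (this.trans h)
  exact ⟨by simpa [mfun] using h2.1, by simpa [mfun] using h2.2⟩

noncomputable def PhiMap (A : ℕ → ℂ) (st : ℝ × ℝ) : Gprod :=
  (Circle.exp (2 * Real.pi * st.1),
   fun k => if st.2 ≤ (1 + mfun (A k) k st.1) / 2 then 1 else -1)

lemma PhiMap_measurable (A : ℕ → ℂ) : Measurable (PhiMap A) := by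
  apply Measurable.prod
  · exact (Circle.exp.continuous.comp (continuous_const.mul continuous_fst)).measurable
  · apply measurable_pi_lambda
    intro k
    apply Measurable.ite _ measurable_const measurable_const
    exact measurableSet_le measurable_snd
      ((((mfun_cont (A k) k).comp continuous_fst).measurable.const_add 1).div_const 2)

noncomputable def lam1 : Measure ℝ := volume.restrict (Set.Ioc (0:ℝ) 1)

instance : IsFiniteMeasure lam1 := by
  unfold lam1
  constructor
  rw [Measure.restrict_apply MeasurableSet.univ]
  simp [Real.volume_Ioc]

lemma integral_sign (p : ℝ) (hp0 : 0 ≤ p) (hp1 : p ≤ 1) :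
    ∫ t, (if t ≤ p then (1:ℂ) else -1) ∂lam1 = 2 * p - 1 := by
  have hfun : (fun t => (if t ≤ p then (1:ℂ) else -1))
      = fun t => (Set.Iic p).indicator (fun _ => (2:ℂ)) t - 1 := by
    funext t
    by_cases h : t ≤ p <;> simp [Set.indicator, h] <;> norm_num
  rw [hfun]
  have hint : Integrable ((Set.Iic p).indicator (fun _ => (2:ℂ))) lam1 :=
    (integrable_const (2:ℂ)).indicator measurableSet_Iic
  rw [integral_sub hint (integrable_const 1), integral_indicator measurableSet_Iic,
    setIntegral_const, integral_const]
  have h1 : lam1 (Set.Iic p) = ENNReal.ofReal p := by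
    rw [lam1, Measure.restrict_apply measurableSet_Iic, Set.Iic_inter_Ioc_of_le hp1,
      Real.volume_Ioc, sub_zero]
  have h2 : lam1 Set.univ = 1 := by
    rw [lam1, Measure.restrict_apply MeasurableSet.univ, Set.univ_inter, Real.volume_Ioc]
    norm_num
  rw [measureReal_def, measureReal_def, h1, h2, ENNReal.toReal_ofReal hp0]
  simp [Complex.real_smul]
  push_cast
  ring

lemma integrable_exp_im (w : ℂ) (hw : w.re = 0) :
    Integrable (fun s : ℝ => Complex.exp (w * s)) lam1 := by
  apply Integrable.mono' (integrable_const (1:ℝ))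
  · exact (Complex.continuous_exp.comp (continuous_const.mul Complex.continuous_ofReal)).aestronglyMeasurable
  · refine Filter.Eventually.of_forall fun s => ?_
    rw [Complex.norm_exp]
    have : (w * s).re = 0 := by
      simp [Complex.mul_re, hw]
    rw [this, Real.exp_zero]

lemma integral_exp_lam1 (j : ℤ) :
    ∫ s : ℝ, Complex.exp (((j : ℂ) * (2 * Real.pi) * Complex.I) * s) ∂lam1
      = if j = 0 then 1 else 0 := by
  have : ∫ s : ℝ, Complex.exp (((j : ℂ) * (2 * Real.pi) * Complex.I) * s) ∂lam1
      = ∫ s in (0:ℝ)..1, Complex.exp (((j : ℂ) * (2 * Real.pi) * Complex.I) * s) := by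
    rw [intervalIntegral.integral_of_le zero_le_one]; rfl
  rw [this]
  by_cases hj : j = 0
  · simp [hj]
  · have hc : ((j : ℂ) * (2 * Real.pi) * Complex.I) ≠ 0 := by
      have : (j:ℂ) ≠ 0 := Int.cast_ne_zero.mpr hj
      have h2 : (2 * Real.pi : ℂ) ≠ 0 := by
        simp [Real.pi_ne_zero]
      exact mul_ne_zero (mul_ne_zero this h2) Complex.I_ne_zero
    rw [integral_exp_mul_complex hc]
    rw [if_neg hj]
    have h1 : ((j : ℂ) * (2 * Real.pi) * Complex.I) * (1:ℝ) = (j:ℂ) * (2 * Real.pi * Complex.I) := by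
      push_cast; ring
    have h0 : ((j : ℂ) * (2 * Real.pi) * Complex.I) * (0:ℝ) = 0 := by push_cast; ring
    rw [h1, h0, Complex.exp_int_mul_two_pi_mul_I, Complex.exp_zero, sub_self, zero_div]

lemma key (A : ℕ → ℂ) (k : ℕ) (hA : ‖A k‖ ≤ 1) (n : ℤ) :
    ∫ x, chr (n, Finsupp.single k (1 : ZMod 2)) x⁻¹ ∂((lam1.prod lam1).map (PhiMap A))
      = A k / 2 * (if n = (k:ℤ) then 1 else 0)
        + (starRingEnd ℂ) (A k) / 2 * (if n = -(k:ℤ) then 1 else 0) := by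
  set cn : ℂ := ((-n : ℤ) : ℂ) * (2 * Real.pi) * Complex.I with hcn
  set ck : ℂ := ((k : ℤ) : ℂ) * (2 * Real.pi) * Complex.I with hck
  -- measurability of the integrand
  have c1 : Continuous fun u : Circle => ((u ^ (-n) : Circle) : ℂ) :=
    continuous_subtype_val.comp (continuous_zpow (-n))
  have mf2 : Measurable fun x : Gprod => ((x.2 k : ℤ) : ℂ) := by
    have h : Measurable fun x : Gprod => x.2 k := (measurable_pi_apply k).comp measurable_snd
    exact (measurable_from_top (f := fun u : Units ℤ => ((u : ℤ) : ℂ))).comp h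
  have mf : Measurable fun x : Gprod => ((x.1 ^ (-n) : Circle) : ℂ) * ((x.2 k : ℤ) : ℂ) :=
    (c1.measurable.comp measurable_fst).mul mf2
  have hΦ : Measurable (PhiMap A) := PhiMap_measurable A
  have hre : cn.re = 0 := by simp [hcn]
  -- rewrite the integrand
  have h1 : ∀ x : Gprod, chr (n, Finsupp.single k (1 : ZMod 2)) x⁻¹
      = ((x.1 ^ (-n) : Circle) : ℂ) * ((x.2 k : ℤ) : ℂ) := fun x => chr_single n k x
  simp only [h1]
  rw [integral_map hΦ.aemeasurable mf.stronglyMeasurable.aestronglyMeasurable]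
  set p : ℝ → ℝ := fun s => (1 + mfun (A k) k s) / 2 with hp
  have h2 : ∀ st : ℝ × ℝ,
      ((((PhiMap A st).1 ^ (-n) : Circle)) : ℂ) * (((PhiMap A st).2 k : ℤ) : ℂ)
        = Complex.exp (cn * st.1) * (if st.2 ≤ p st.1 then (1:ℂ) else -1) := by
    intro st
    have e1 : ((((PhiMap A st).1 ^ (-n) : Circle)) : ℂ) = Complex.exp (cn * st.1) := by
      show ((Circle.exp (2 * Real.pi * st.1) ^ (-n) : Circle) : ℂ) = _
      rw [Circle.coe_zpow, Circle.coe_exp, ← Complex.exp_int_mul]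
      congr 1
      push_cast [hcn]
      ring
    have e2 : (((PhiMap A st).2 k : ℤ) : ℂ) = (if st.2 ≤ p st.1 then (1:ℂ) else -1) := by
      show (((if st.2 ≤ p st.1 then (1 : Units ℤ) else -1 : Units ℤ) : ℤ) : ℂ) = _
      split_ifs <;> simp
    rw [e1, e2]
  rw [integral_congr_ae (ae_of_all _ h2)]
  -- Fubini
  have msgn : Measurable fun st : ℝ × ℝ => (if st.2 ≤ p st.1 then (1:ℂ) else -1) := by
    apply Measurable.ite _ measurable_const measurable_const
    exact measurableSet_le measurable_snd
      ((((mfun_cont (A k) k).comp continuous_fst).measurable.const_add 1).div_const 2)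
  have mexp : Measurable fun st : ℝ × ℝ => Complex.exp (cn * st.1) :=
    (Complex.continuous_exp.comp
      (continuous_const.mul (Complex.continuous_ofReal.comp continuous_fst))).measurable
  have hrecn : ∀ s : ℝ, (cn * (s:ℂ)).re = 0 := by
    intro s; simp [Complex.mul_re, hcn]
  have hF : Integrable (fun st : ℝ × ℝ =>
      Complex.exp (cn * st.1) * (if st.2 ≤ p st.1 then (1:ℂ) else -1)) (lam1.prod lam1) := by
    apply Integrable.mono' (integrable_const (1:ℝ))
      (mexp.mul msgn).stronglyMeasurable.aestronglyMeasurable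
    refine Filter.Eventually.of_forall fun st => ?_
    simp only [Pi.mul_apply]
    rw [norm_mul, Complex.norm_exp, hrecn, Real.exp_zero, one_mul]
    split_ifs <;> simp
  rw [integral_prod _ hF]
  -- inner integral over t
  have h3 : ∀ s : ℝ,
      (∫ t, Complex.exp (cn * s) * (if t ≤ p s then (1:ℂ) else -1) ∂lam1)
        = Complex.exp (cn * s) * ((mfun (A k) k s : ℝ) : ℂ) := by
    intro s
    rw [integral_const_mul]
    have hm := mfun_mem (A k) k hA s
    have hp0 : 0 ≤ p s := by simp only [hp]; linarith [hm.1]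
    have hp1 : p s ≤ 1 := by simp only [hp]; linarith [hm.2]
    rw [integral_sign (p s) hp0 hp1]
    congr 1
    simp only [hp]
    push_cast
    ring
  rw [integral_congr_ae (ae_of_all _ h3)]
  -- rewrite the integrand as exponentials
  have h4 : ∀ s : ℝ, Complex.exp (cn * s) * ((mfun (A k) k s : ℝ) : ℂ)
      = A k / 2 * Complex.exp (((((k:ℤ) - n : ℤ)):ℂ) * (2 * Real.pi) * Complex.I * s)
        + (starRingEnd ℂ) (A k) / 2
          * Complex.exp ((((-n - (k:ℤ) : ℤ)):ℂ) * (2 * Real.pi) * Complex.I * s) := by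
    intro s
    have hmc : ((mfun (A k) k s : ℝ) : ℂ)
        = (A k * Complex.exp (ck * s) + (starRingEnd ℂ) (A k) * Complex.exp (-(ck * s))) / 2 := by
      unfold mfun
      set w : ℂ := A k * Complex.exp ((2 * Real.pi * k * s : ℝ) * Complex.I) with hw
      have hwre : ((w.re : ℝ) : ℂ) = (w + (starRingEnd ℂ) w) / 2 := by
        rw [Complex.add_conj]; push_cast; ring
      rw [hwre]
      have hw1 : w = A k * Complex.exp (ck * s) := by
        rw [hw]; congr 1; push_cast [hck]; ring
      have hw2 : (starRingEnd ℂ) w = (starRingEnd ℂ) (A k) * Complex.exp (-(ck * s)) := by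
        rw [hw, map_mul, ← Complex.exp_conj, map_mul, Complex.conj_ofReal, Complex.conj_I]
        congr 1
        push_cast [hck]
        ring
      rw [hw2, hw1]
    rw [hmc]
    have e1 : Complex.exp (cn * s) * Complex.exp (ck * s)
        = Complex.exp (((((k:ℤ) - n : ℤ)):ℂ) * (2 * Real.pi) * Complex.I * s) := by
      rw [← Complex.exp_add]; congr 1; push_cast [hcn, hck]; ring
    have e2 : Complex.exp (cn * s) * Complex.exp (-(ck * s))
        = Complex.exp ((((-n - (k:ℤ) : ℤ)):ℂ) * (2 * Real.pi) * Complex.I * s) := by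
      rw [← Complex.exp_add]; congr 1; push_cast [hcn, hck]; ring
    rw [mul_div_assoc' , mul_add]
    rw [show Complex.exp (cn * ↑s) * (A k * Complex.exp (ck * ↑s))
        = A k * (Complex.exp (cn * ↑s) * Complex.exp (ck * ↑s)) by ring,
      show Complex.exp (cn * ↑s) * ((starRingEnd ℂ) (A k) * Complex.exp (-(ck * ↑s)))
        = (starRingEnd ℂ) (A k) * (Complex.exp (cn * ↑s) * Complex.exp (-(ck * ↑s))) by ring,
      e1, e2]
    ring
  rw [integral_congr_ae (ae_of_all _ h4)]
  have hi1 : Integrable (fun s : ℝ =>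
      A k / 2 * Complex.exp (((((k:ℤ) - n : ℤ)):ℂ) * (2 * Real.pi) * Complex.I * s)) lam1 := by
    apply Integrable.const_mul
    apply integrable_exp_im
    simp
  have hi2 : Integrable (fun s : ℝ =>
      (starRingEnd ℂ) (A k) / 2
        * Complex.exp ((((-n - (k:ℤ) : ℤ)):ℂ) * (2 * Real.pi) * Complex.I * s)) lam1 := by
    apply Integrable.const_mul
    apply integrable_exp_im
    simp
  rw [integral_add hi1 hi2, integral_const_mul, integral_const_mul,
    integral_exp_lam1 ((k:ℤ) - n), integral_exp_lam1 (-n - (k:ℤ))]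
  have c1' : ((k:ℤ) - n = 0) ↔ (n = (k:ℤ)) := by omega
  have c2' : (-n - (k:ℤ) = 0) ↔ (n = -(k:ℤ)) := by omega
  simp only [c1', c2']

lemma toJD_toSignedMeasure {α : Type*} [MeasurableSpace α] (ν : Measure α) [IsFiniteMeasure ν] :
    ν.toSignedMeasure.toJordanDecomposition
      = ⟨ν, 0, Measure.MutuallySingular.zero_right⟩ := by
  have h : (⟨ν, 0, Measure.MutuallySingular.zero_right⟩ :
      JordanDecomposition α).toSignedMeasure = ν.toSignedMeasure := by
    show ν.toSignedMeasure - (0 : Measure α).toSignedMeasure = ν.toSignedMeasure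
    rw [Measure.toSignedMeasure_zero, sub_zero]
  rw [← h, JordanDecomposition.toJordanDecomposition_toSignedMeasure]

lemma cm_eval {α : Type*} [MeasurableSpace α] (ν₁ ν₂ : Measure α)
    [IsFiniteMeasure ν₁] [IsFiniteMeasure ν₂] (f : α → ℂ) :
    cmIntegral (SignedMeasure.toComplexMeasure ν₁.toSignedMeasure ν₂.toSignedMeasure) f
      = (∫ x, f x ∂ν₁) + Complex.I * ∫ x, f x ∂ν₂ := by
  unfold cmIntegral
  rw [SignedMeasure.re_toComplexMeasure, SignedMeasure.im_toComplexMeasure,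
    toJD_toSignedMeasure ν₁, toJD_toSignedMeasure ν₂]
  simp [integral_zero_measure]

lemma isFiniteSMul {α : Type*} [MeasurableSpace α] (ν : Measure α) [IsFiniteMeasure ν] (c : ℝ) :
    IsFiniteMeasure (ENNReal.ofReal c • ν) := by
  constructor
  rw [Measure.smul_apply, smul_eq_mul]
  exact ENNReal.mul_lt_top ENNReal.ofReal_lt_top (measure_lt_top ν _)


/-- `E` is a Sidon set: every bounded function on `E` is interpolated by the
Fourier–Stieltjes transform `γ ↦ ∫ γ(x⁻¹) dμ(x)` of a finite complex Borel
measure `μ` on `G`. -/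
theorem stmt13 :
    ∀ φ : (ℤ × (ℕ →₀ ZMod 2)) → ℂ,
      (∃ C : ℝ, ∀ γ ∈ Eset, ‖φ γ‖ ≤ C) →
        ∃ μ : MeasureTheory.ComplexMeasure Gprod,
          ∀ γ ∈ Eset, cmIntegral μ (fun x => chr γ x⁻¹) = φ γ := by
  intro φ hφ
  obtain ⟨C₀, hC₀⟩ := hφ
  set C : ℝ := max C₀ 0 with hCdef
  have hCnn : (0:ℝ) ≤ C := le_max_right _ _
  have hbound : ∀ γ ∈ Eset, ‖φ γ‖ ≤ C :=
    fun γ hγ => (hC₀ γ hγ).trans (le_max_left _ _)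
  set c : ℝ := 2 * C + 1 with hcdef
  have hcpos : (0:ℝ) < c := by positivity
  have hcne : (c : ℂ) ≠ 0 := by
    exact_mod_cast ne_of_gt hcpos
  set P : ℕ → ℂ := fun k => φ ((k:ℤ), Finsupp.single k (1 : ZMod 2)) with hPdef
  set Q : ℕ → ℂ := fun k => φ (-(k:ℤ), Finsupp.single k (1 : ZMod 2)) with hQdef
  set A : ℕ → ℂ := fun k => (P k + (starRingEnd ℂ) (Q k)) / c with hAdef
  set B : ℕ → ℂ := fun k => (-Complex.I) * (P k - (starRingEnd ℂ) (Q k)) / c with hBdef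
  have hmem1 : ∀ k : ℕ, 1 ≤ k → (((k:ℤ), Finsupp.single k (1:ZMod 2)) : ℤ × (ℕ →₀ ZMod 2)) ∈ Eset :=
    fun k hk => ⟨k, hk, Or.inl rfl⟩
  have hmem2 : ∀ k : ℕ, 1 ≤ k → ((-(k:ℤ), Finsupp.single k (1:ZMod 2)) : ℤ × (ℕ →₀ ZMod 2)) ∈ Eset :=
    fun k hk => ⟨k, hk, Or.inr rfl⟩
  have habs : ∀ k : ℕ, 1 ≤ k → ‖P k‖ ≤ C ∧ ‖Q k‖ ≤ C := by
    intro k hk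
    exact ⟨hbound _ (hmem1 k hk), hbound _ (hmem2 k hk)⟩
  have hAk : ∀ k : ℕ, 1 ≤ k → ‖A k‖ ≤ 1 := by
    intro k hk
    rw [hAdef]
    simp only [norm_div, Complex.norm_of_nonneg hcpos.le]
    rw [div_le_one hcpos]
    calc ‖P k + (starRingEnd ℂ) (Q k)‖
        ≤ ‖P k‖ + ‖(starRingEnd ℂ) (Q k)‖ := norm_add_le _ _
      _ ≤ C + C := by
          rw [Complex.norm_conj]
          exact add_le_add (habs k hk).1 (habs k hk).2
      _ ≤ c := by rw [hcdef]; linarith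
  have hBk : ∀ k : ℕ, 1 ≤ k → ‖B k‖ ≤ 1 := by
    intro k hk
    rw [hBdef]
    simp only [norm_div, norm_mul, Complex.norm_of_nonneg hcpos.le]
    rw [div_le_one hcpos]
    have h1 : ‖-Complex.I‖ = 1 := by simp
    rw [h1, one_mul]
    calc ‖P k - (starRingEnd ℂ) (Q k)‖
        ≤ ‖P k‖ + ‖(starRingEnd ℂ) (Q k)‖ :=
          norm_sub_le _ _
      _ ≤ C + C := by
          rw [Complex.norm_conj]
          exact add_le_add (habs k hk).1 (habs k hk).2
      _ ≤ c := by rw [hcdef]; linarith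
  haveI i1 : IsFiniteMeasure ((lam1.prod lam1).map (PhiMap A)) :=
    Measure.isFiniteMeasure_map (lam1.prod lam1) (PhiMap A)
  haveI i2 : IsFiniteMeasure ((lam1.prod lam1).map (PhiMap B)) :=
    Measure.isFiniteMeasure_map (lam1.prod lam1) (PhiMap B)
  set ν₁ : Measure Gprod := ENNReal.ofReal c • ((lam1.prod lam1).map (PhiMap A)) with hν₁
  set ν₂ : Measure Gprod := ENNReal.ofReal c • ((lam1.prod lam1).map (PhiMap B)) with hν₂
  haveI j1 : IsFiniteMeasure ν₁ := isFiniteSMul _ c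
  haveI j2 : IsFiniteMeasure ν₂ := isFiniteSMul _ c
  refine ⟨SignedMeasure.toComplexMeasure ν₁.toSignedMeasure ν₂.toSignedMeasure, ?_⟩
  rintro γ ⟨k, hk, hcase⟩
  have hkne : ((k:ℤ)) ≠ -((k:ℤ)) := by omega
  rcases hcase with h | h <;> subst h <;>
    rw [cm_eval, hν₁, hν₂, integral_smul_measure, integral_smul_measure,
      ENNReal.toReal_ofReal hcpos.le]
  · rw [show (∫ x, chr ((k:ℤ), Finsupp.single k (1:ZMod 2)) x⁻¹
        ∂((lam1.prod lam1).map (PhiMap A)))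
        = A k / 2 * (if (k:ℤ) = (k:ℤ) then 1 else 0)
          + (starRingEnd ℂ) (A k) / 2 * (if (k:ℤ) = -(k:ℤ) then 1 else 0) from
      key A k (hAk k hk) (k:ℤ),
      show (∫ x, chr ((k:ℤ), Finsupp.single k (1:ZMod 2)) x⁻¹
        ∂((lam1.prod lam1).map (PhiMap B)))
        = B k / 2 * (if (k:ℤ) = (k:ℤ) then 1 else 0)
          + (starRingEnd ℂ) (B k) / 2 * (if (k:ℤ) = -(k:ℤ) then 1 else 0) from
      key B k (hBk k hk) (k:ℤ)]
    rw [if_pos rfl, if_neg hkne]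
    rw [hAdef, hBdef]
    simp only [Complex.real_smul, map_div₀, map_mul, map_add, map_sub, map_neg,
      Complex.conj_conj, Complex.conj_ofReal, Complex.conj_I]
    field_simp
    ring_nf
    simp only [Complex.I_sq]
    ring
  · rw [show (∫ x, chr (-(k:ℤ), Finsupp.single k (1:ZMod 2)) x⁻¹
        ∂((lam1.prod lam1).map (PhiMap A)))
        = A k / 2 * (if -(k:ℤ) = (k:ℤ) then 1 else 0)
          + (starRingEnd ℂ) (A k) / 2 * (if -(k:ℤ) = -(k:ℤ) then 1 else 0) from
      key A k (hAk k hk) (-(k:ℤ)),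
      show (∫ x, chr (-(k:ℤ), Finsupp.single k (1:ZMod 2)) x⁻¹
        ∂((lam1.prod lam1).map (PhiMap B)))
        = B k / 2 * (if -(k:ℤ) = (k:ℤ) then 1 else 0)
          + (starRingEnd ℂ) (B k) / 2 * (if -(k:ℤ) = -(k:ℤ) then 1 else 0) from
      key B k (hBk k hk) (-(k:ℤ))]
    rw [if_pos rfl, if_neg (fun h => hkne h.symm)]
    rw [hAdef, hBdef]
    simp only [Complex.real_smul, map_div₀, map_mul, map_add, map_sub, map_neg,
      Complex.conj_conj, Complex.conj_ofReal, Complex.conj_I]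
    field_simp
    ring_nf
    simp only [Complex.I_sq]
    ring
end

section
/- Let G = 𝕋 × ∏_{k=1}^∞ {−1, +1} with dual group Γ = ℤ ⊕ (⊕_{k=1}^∞ ℤ₂) as above, and let E = {(k, b_k) : k ≥ 1} ∪ {(−k, b_k) : k ≥ 1} ⊆ Γ. Then the Kronecker constant of E equals 2: κ(E) = 2. In particular, for every ε > 0 there is no x ∈ G approximating within 2 − ε the function φ : E → 𝕋 that equals −1 on {(k, b_k)} and +1 on {(−k, b_k)}. -/
open Complex

/-- The Kronecker constant of a set `E ⊆ ℤ ⊕ (⊕ₖ ℤ₂)`, the dual group of `Gprod`. -/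
noncomputable def kappaE (E : Set (ℤ × (ℕ →₀ ZMod 2))) : ℝ :=
  sInf {ε : ℝ | 0 ≤ ε ∧ ∀ φ : (ℤ × (ℕ →₀ ZMod 2)) → ℂ,
    (∀ γ ∈ E, ‖φ γ‖ = 1) →
      ∃ x : Gprod, ∀ γ ∈ E, ‖φ γ - chr γ x‖ < ε}

lemma circle_coe_zpow (z : Circle) (n : ℤ) : ((z ^ n : Circle) : ℂ) = (z : ℂ) ^ n :=
  map_zpow' Circle.coeHom Circle.coe_inv z n

/-- Evaluation of `chr` at elements of `E`. -/
lemma chr_eval (m : ℤ) (k : ℕ) (x : Gprod) :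
    chr (m, Finsupp.single k (1 : ZMod 2)) x = (x.1 : ℂ) ^ m * ((x.2 k : ℤ) : ℂ) := by
  have hsupp : (Finsupp.single k (1 : ZMod 2)).support = {k} :=
    Finsupp.support_single_ne_zero k one_ne_zero
  have hval : ((1 : ZMod 2)).val = 1 := rfl
  rw [chr]
  simp only [hsupp, Finset.prod_singleton, Finsupp.single_eq_same, hval, pow_one,
    circle_coe_zpow]

/-- `|chr γ x| = 1` always. -/
lemma abs_chr (γ : ℤ × (ℕ →₀ ZMod 2)) (x : Gprod) : ‖chr γ x‖ = 1 := by
  unfold chr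
  rw [norm_mul, Circle.norm_coe, one_mul, norm_prod]
  apply Finset.prod_eq_one
  intro k _
  rcases Int.units_eq_one_or (x.2 k) with h | h <;> simp [h]

/-- Pigeonhole: powers of a circle element come back near `1`. -/
lemma exists_pow_near_one (u : Circle) (δ : ℝ) (hδ : 0 < δ) :
    ∃ k : ℕ, 1 ≤ k ∧ ‖(u : ℂ) ^ k - 1‖ < δ := by
  have hmem : ∀ n : ℕ, (u : ℂ) ^ n ∈ Metric.sphere (0 : ℂ) 1 := by
    intro n
    simp [norm_pow, Circle.norm_coe]
  obtain ⟨a, -, ψ, hψ, hconv⟩ :=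
    (isCompact_sphere (0 : ℂ) 1).tendsto_subseq hmem
  rw [Metric.tendsto_atTop] at hconv
  obtain ⟨N, hN⟩ := hconv (δ / 2) (by linarith)
  have h1 := hN N le_rfl
  have h2 := hN (N + 1) (by omega)
  simp only [Function.comp] at h1 h2
  have hlt : ψ N < ψ (N + 1) := hψ (by omega)
  refine ⟨ψ (N + 1) - ψ N, by omega, ?_⟩
  have hdist : ‖(u : ℂ) ^ ψ (N + 1) - (u : ℂ) ^ ψ N‖ < δ := by
    have hcalc : dist ((u : ℂ) ^ ψ (N + 1)) ((u : ℂ) ^ ψ N) < δ := by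
      calc dist ((u : ℂ) ^ ψ (N + 1)) ((u : ℂ) ^ ψ N)
          ≤ dist ((u : ℂ) ^ ψ (N + 1)) a + dist a ((u : ℂ) ^ ψ N) := dist_triangle _ _ _
        _ < δ / 2 + δ / 2 := add_lt_add h2 (by rwa [dist_comm] at h1)
        _ = δ := by ring
    simpa [Complex.dist_eq] using hcalc
  have hfactor : (u : ℂ) ^ ψ (N + 1) - (u : ℂ) ^ ψ N
      = (u : ℂ) ^ ψ N * ((u : ℂ) ^ (ψ (N + 1) - ψ N) - 1) := by
    have hexp : ψ N + (ψ (N + 1) - ψ N) = ψ (N + 1) := by omega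
    rw [mul_sub, mul_one, ← pow_add, hexp]
  rw [hfactor, norm_mul, norm_pow, Circle.norm_coe, one_pow, one_mul] at hdist
  exact hdist

/-- The key impossibility statement: the second half of the theorem. -/
lemma no_approx : ∀ ε : ℝ, 0 < ε →
    ¬ ∃ x : Gprod, ∀ k : ℕ, 1 ≤ k →
      ‖(-1 : ℂ) - chr (((k : ℤ), Finsupp.single k (1 : ZMod 2))) x‖ < 2 - ε ∧
      ‖(1 : ℂ) - chr ((-(k : ℤ), Finsupp.single k (1 : ZMod 2))) x‖ < 2 - ε := by
  rintro ε hε ⟨x, hx⟩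
  obtain ⟨k, hk1, hknear⟩ := exists_pow_near_one x.1 ε hε
  obtain ⟨h₁, h₂⟩ := hx k hk1
  rw [chr_eval] at h₁ h₂
  set u : ℂ := (x.1 : ℂ) with hu
  have habs : ‖u‖ = 1 := Circle.norm_coe x.1
  have habsk : ‖u ^ k‖ = 1 := by rw [norm_pow, habs, one_pow]
  have hne : u ^ k ≠ 0 := by
    intro h
    rw [h] at habsk
    simp at habsk
  have hz : u ^ (k : ℤ) = u ^ k := zpow_natCast u k
  rcases Int.units_eq_one_or (x.2 k) with hg | hg
  · -- x.2 k = 1 : contradiction from the first inequality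
    rw [hg] at h₁
    simp only [Units.val_one, Int.cast_one, mul_one, hz] at h₁
    have htri : (2 : ℝ) ≤ ‖(-1 : ℂ) - u ^ k‖ + ‖u ^ k - 1‖ := by
      have h := norm_sub_le_norm_sub_add_norm_sub (-1 : ℂ) (u ^ k) 1
      have : ‖(-1 : ℂ) - 1‖ = 2 := by norm_num
      linarith
    linarith
  · -- x.2 k = -1 : contradiction from the second inequality
    rw [hg] at h₂
    simp only [Units.val_neg, Units.val_one, Int.cast_neg, Int.cast_one, mul_neg, mul_one] at h₂
    have hzneg : u ^ (-(k : ℤ)) = (u ^ k)⁻¹ := by rw [zpow_neg, zpow_natCast]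
    rw [hzneg] at h₂
    have habsinv : ‖(u ^ k)⁻¹ - 1‖ = ‖u ^ k - 1‖ := by
      have heq : (u ^ k)⁻¹ - 1 = (u ^ k)⁻¹ * (1 - u ^ k) := by
        field_simp
      rw [heq, norm_mul, norm_inv, habsk, inv_one, one_mul, ← norm_neg, neg_sub]
    have htri : (2 : ℝ) ≤ ‖(1 : ℂ) - -(u ^ k)⁻¹‖ +
        ‖(u ^ k)⁻¹ - 1‖ := by
      have h := norm_sub_le_norm_sub_add_norm_sub (1 : ℂ) (-(u ^ k)⁻¹) (1 - 2 * (u ^ k)⁻¹)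
      have e1 : (1 : ℂ) - (1 - 2 * (u ^ k)⁻¹) = 2 * (u ^ k)⁻¹ := by ring
      have e2 : -(u ^ k)⁻¹ - (1 - 2 * (u ^ k)⁻¹) = (u ^ k)⁻¹ - 1 := by ring
      rw [e1, e2, norm_mul, norm_inv, habsk, inv_one, mul_one, Complex.norm_two] at h
      exact h
    rw [habsinv] at htri
    linarith

/-- `κ(E) = 2`; in particular no point of `G` approximates within `2 − ε` the
function which is `−1` on `{(k, bₖ)}` and `+1` on `{(−k, bₖ)}`. -/
theorem stmt14 :
    kappaE Eset = 2 ∧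
    ∀ ε : ℝ, 0 < ε →
      ¬ ∃ x : Gprod, ∀ k : ℕ, 1 ≤ k →
        ‖(-1 : ℂ) - chr (((k : ℤ), Finsupp.single k (1 : ZMod 2))) x‖ < 2 - ε ∧
        ‖(1 : ℂ) - chr ((-(k : ℤ), Finsupp.single k (1 : ZMod 2))) x‖ < 2 - ε := by
  constructor
  · -- κ(E) = 2
    set S : Set ℝ := {ε : ℝ | 0 ≤ ε ∧ ∀ φ : (ℤ × (ℕ →₀ ZMod 2)) → ℂ,
      (∀ γ ∈ Eset, ‖φ γ‖ = 1) →
        ∃ x : Gprod, ∀ γ ∈ Eset, ‖φ γ - chr γ x‖ < ε} with hS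
    have hmem : ∀ ε : ℝ, 2 < ε → ε ∈ S := by
      intro ε hε
      refine ⟨by linarith, fun φ hφ => ⟨(1, fun _ => 1), fun γ hγ => ?_⟩⟩
      calc ‖φ γ - chr γ (1, fun _ => 1)‖
          = ‖φ γ + -chr γ (1, fun _ => 1)‖ := by rw [sub_eq_add_neg]
        _ ≤ ‖φ γ‖ + ‖-chr γ (1, fun _ => 1)‖ :=
            norm_add_le _ _
        _ = 2 := by rw [hφ γ hγ, norm_neg, abs_chr]; norm_num
        _ < ε := hε
    have hlb : ∀ ε ∈ S, (2 : ℝ) ≤ ε := by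
      rintro ε ⟨hε0, hεprop⟩
      by_contra hlt
      push_neg at hlt
      set φ : (ℤ × (ℕ →₀ ZMod 2)) → ℂ := fun γ => if 0 < γ.1 then -1 else 1 with hφdef
      have hφabs : ∀ γ ∈ Eset, ‖φ γ‖ = 1 := by
        intro γ _
        by_cases h : 0 < γ.1 <;> simp [hφdef, h]
      obtain ⟨x, hx⟩ := hεprop φ hφabs
      apply no_approx (2 - ε) (by linarith)
      refine ⟨x, fun k hk => ?_⟩
      have hkpos : (0 : ℤ) < (k : ℤ) := by exact_mod_cast hk
      have hp := hx (((k : ℤ), Finsupp.single k (1 : ZMod 2))) ⟨k, hk, Or.inl rfl⟩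
      have hn := hx ((-(k : ℤ), Finsupp.single k (1 : ZMod 2))) ⟨k, hk, Or.inr rfl⟩
      have hφp : φ (((k : ℤ), Finsupp.single k (1 : ZMod 2))) = -1 := by
        simp only [hφdef]
        rw [if_pos hkpos]
      have hφn : φ ((-(k : ℤ), Finsupp.single k (1 : ZMod 2))) = 1 := by
        simp only [hφdef]
        rw [if_neg (by omega)]
      rw [hφp] at hp
      rw [hφn] at hn
      have he : (2 : ℝ) - (2 - ε) = ε := by ring
      rw [he]
      exact ⟨hp, hn⟩
    have hne : S.Nonempty := ⟨3, hmem 3 (by norm_num)⟩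
    have hbdd : BddBelow S := ⟨0, fun ε hε => hε.1⟩
    apply le_antisymm
    · apply le_of_forall_pos_le_add
      intro δ hδ
      exact csInf_le hbdd (hmem (2 + δ) (by linarith))
    · exact le_csInf hne hlb
  · exact no_approx
end

section
/- Let n ≥ 2 be an integer and let c be a real number with c < |1 − e^{iπ(1−1/n)}|. For any finite set F and any function z : F → 𝕋, the set V = {ψ : F → 𝐓ₙ such that |z(γ) − ψ(γ)| ≤ c for all γ ∈ F} has cardinality at most (n−1)^{|F|}. (Consequently, any covering of the set of all functions F → 𝐓ₙ by such sets requires at least (n/(n−1))^{|F|} of them.) -/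
open Complex
open scoped Real

open Complex
open scoped Real

lemma aux_sq (x : ℝ) : (‖1 - Complex.exp (x * I)‖)^2 = 2 - 2 * Real.cos x := by
  rw [← Complex.normSq_eq_norm_sq, Complex.normSq_apply]
  simp [Complex.exp_ofReal_mul_I_re, Complex.exp_ofReal_mul_I_im]
  nlinarith [Real.sin_sq_add_cos_sq x]

lemma aux_shift (a b : ℝ) : ‖Complex.exp (a*I) - Complex.exp (b*I)‖
    = ‖1 - Complex.exp ((a-b)*I)‖ := by
  have h : Complex.exp ((a:ℂ)*I) - Complex.exp ((b:ℂ)*I)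
      = Complex.exp ((b:ℂ)*I) * (Complex.exp (((a-b:ℝ):ℂ)*I) - 1) := by
    rw [mul_sub, ← Complex.exp_add, mul_one]
    push_cast
    ring_nf
  rw [h, norm_mul, Complex.norm_exp_ofReal_mul_I, one_mul, ← norm_neg, neg_sub]
  norm_cast

lemma key_geom (n : ℕ) (hn : 2 ≤ n) (w : ℂ) (hw : ‖w‖ = 1) :
    ∃ ψ : ℂ, ψ ^ n = 1 ∧
      ‖1 - Complex.exp (π * (1 - 1 / (n : ℂ)) * Complex.I)‖ ≤ ‖w - ψ‖ := by
  have hn0 : (n:ℝ) ≠ 0 := by positivity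
  have hnpos : (0:ℝ) < n := by positivity
  set θ := Complex.arg w with hθ
  have hw' : w = Complex.exp (θ * I) := by
    conv_lhs => rw [← Complex.norm_mul_exp_arg_mul_I w]
    rw [hw, ofReal_one, one_mul]
  set t : ℝ := (n * (θ - π)) / (2 * π) with ht
  set k : ℤ := round t with hk
  set φ : ℝ := 2 * π * k / n with hφ
  refine ⟨Complex.exp (φ * I), ?_, ?_⟩
  · rw [← Complex.exp_nat_mul]
    have : (n:ℂ) * ((φ:ℂ) * I) = (k:ℂ) * (2 * π * I) := by
      have hn0c : (n:ℂ) ≠ 0 := Nat.cast_ne_zero.mpr (by omega)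
      rw [hφ]; push_cast; field_simp
    rw [this, Complex.exp_int_mul_two_pi_mul_I]
  · rw [hw', aux_shift]
    have hrw : (π : ℂ) * (1 - 1 / (n : ℂ)) * Complex.I = ((π - π/n : ℝ) : ℂ) * I := by
      push_cast; field_simp
    rw [hrw]
    have hπn : 0 < π / n := by positivity
    have hπn' : π / n ≤ π / 2 := by
      apply div_le_div_of_nonneg_left Real.pi_pos.le (by norm_num)
      exact_mod_cast hn
    -- θ - φ = π + x with |x| ≤ π/n
    have hround : |t - k| ≤ 1/2 := by
      exact abs_sub_round t
    have hx : θ - φ = π + 2 * π * (t - k) / n := by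
      rw [ht, hφ]; field_simp; ring
    set x : ℝ := 2 * π * (t - k) / n with hxdef
    have hxb : |x| ≤ π / n := by
      rw [hxdef, abs_div, abs_of_pos hnpos, div_le_div_iff₀ hnpos hnpos]
      rw [abs_mul, abs_of_pos (by positivity : (0:ℝ) < 2*π)]
      calc 2 * π * |t - k| * n ≤ 2 * π * (1/2) * n := by
            apply mul_le_mul_of_nonneg_right _ hnpos.le
            exact mul_le_mul_of_nonneg_left hround (by positivity)
        _ = π * n := by ring
  -- compare cosines
    have hcos : Real.cos (θ - φ) ≤ Real.cos (π - π/n) := by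
      rw [hx, Real.cos_pi_sub]
      have : Real.cos (π + x) = - Real.cos x := by
        rw [Real.cos_add]; simp
      rw [this, neg_le_neg_iff]
      calc Real.cos (π/n) ≤ Real.cos |x| := by
            apply Real.cos_le_cos_of_nonneg_of_le_pi (abs_nonneg x)
            · linarith [Real.pi_pos, hπn']
            · exact hxb
        _ = Real.cos x := Real.cos_abs x
    have h1 := aux_sq (π - π/n)
    have h2 := aux_sq (θ - φ)
    have hnn1 : 0 ≤ ‖1 - Complex.exp (((π - π/n : ℝ):ℂ) * I)‖ := by positivity
    have hnn2 : 0 ≤ ‖1 - Complex.exp (((θ - φ : ℝ):ℂ) * I)‖ := by positivity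
    have hcast : ((θ:ℂ) - (φ:ℂ)) = ((θ - φ : ℝ) : ℂ) := by push_cast; ring
    rw [hcast]
    nlinarith [h1, h2, hcos, hnn1, hnn2]

lemma piA_card (n : ℕ) (hn : 2 ≤ n) (c : ℝ)
    (hc : c < ‖1 - Complex.exp (π * (1 - 1 / (n : ℂ)) * Complex.I)‖)
    {F : Type*} [Fintype F] [DecidableEq F] (w : F → ℂ) (hw : ∀ γ, ‖w γ‖ = 1) :
    (Fintype.piFinset (fun γ => (Polynomial.nthRootsFinset n (1 : ℂ)).filter
        (fun ψ => ‖w γ - ψ‖ ≤ c))).card ≤ (n-1) ^ (Fintype.card F) := by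
  classical
  have hnpos : 0 < n := by omega
  have filt : ∀ γ : F, (((Polynomial.nthRootsFinset n (1 : ℂ)).filter
      (fun ψ => ‖w γ - ψ‖ ≤ c)).card ≤ n - 1) := by
    intro γ
    obtain ⟨ψ0, hψ0, hd⟩ := key_geom n hn (w γ) (hw γ)
    have hmem : ψ0 ∈ Polynomial.nthRootsFinset n (1 : ℂ) :=
      (Polynomial.mem_nthRootsFinset hnpos (1 : ℂ)).mpr hψ0
    have hss : ((Polynomial.nthRootsFinset n (1 : ℂ)).filter
        (fun ψ => ‖w γ - ψ‖ ≤ c)) ⊂ Polynomial.nthRootsFinset n (1 : ℂ) :=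
      Finset.filter_ssubset.mpr ⟨ψ0, hmem, by push_neg; exact lt_of_lt_of_le hc hd⟩
    have h2 := Finset.card_lt_card hss
    rw [(Complex.isPrimitiveRoot_exp n (by omega)).card_nthRootsFinset] at h2
    omega
  rw [Fintype.card_piFinset]
  calc ∏ γ : F, ((Polynomial.nthRootsFinset n (1 : ℂ)).filter
          (fun ψ => ‖w γ - ψ‖ ≤ c)).card
      ≤ ∏ _γ : F, (n-1) := Finset.prod_le_prod' (fun γ _ => filt γ)
    _ = (n-1) ^ (Fintype.card F) := by
        rw [Finset.prod_const, Finset.card_univ]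

lemma main_card (n : ℕ) (hn : 2 ≤ n) (c : ℝ)
    (hc : c < ‖1 - Complex.exp (π * (1 - 1 / (n : ℂ)) * Complex.I)‖)
    {F : Type*} [Fintype F] (w : F → ℂ) (hw : ∀ γ, ‖w γ‖ = 1) :
    Nat.card {ψ : F → ℂ // (∀ γ : F, ψ γ ^ n = 1) ∧ ∀ γ : F, ‖w γ - ψ γ‖ ≤ c}
      ≤ (n-1) ^ (Fintype.card F) := by
  classical
  have hnpos : 0 < n := by omega
  set A : Finset (F → ℂ) := Fintype.piFinset (fun γ => (Polynomial.nthRootsFinset n (1 : ℂ)).filter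
      (fun ψ => ‖w γ - ψ‖ ≤ c)) with hA
  have hsub : ∀ ψ : F → ℂ,
      ((∀ γ : F, ψ γ ^ n = 1) ∧ ∀ γ : F, ‖w γ - ψ γ‖ ≤ c) → ψ ∈ A := by
    intro ψ hψ
    rw [hA, Fintype.mem_piFinset]
    intro γ
    rw [Finset.mem_filter, Polynomial.mem_nthRootsFinset hnpos]
    exact ⟨hψ.1 γ, hψ.2 γ⟩
  have hinj : Function.Injective
      (fun x : {ψ : F → ℂ // (∀ γ : F, ψ γ ^ n = 1) ∧ ∀ γ : F, ‖w γ - ψ γ‖ ≤ c} =>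
        (⟨x.1, hsub x.1 x.2⟩ : {ψ // ψ ∈ A})) := by
    intro a b hab
    exact Subtype.ext (Subtype.mk_eq_mk.mp hab)
  calc Nat.card {ψ : F → ℂ // (∀ γ : F, ψ γ ^ n = 1) ∧ ∀ γ : F, ‖w γ - ψ γ‖ ≤ c}
      ≤ Nat.card {ψ // ψ ∈ A} := Nat.card_le_card_of_injective _ hinj
    _ = A.card := by rw [Nat.card_eq_fintype_card, Fintype.card_coe]
    _ ≤ (n-1) ^ (Fintype.card F) := piA_card n hn c hc w hw

/-- If `c < |1 − e^{iπ(1−1/n)}|`, then for any `z : F → 𝕋` the set of functions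
`ψ : F → 𝐓ₙ` with `|z(γ) − ψ(γ)| ≤ c` for all `γ` has at most `(n−1)^|F|` elements;
consequently, covering all of `𝐓ₙ^F` by such sets requires at least `(n/(n−1))^|F|`
of them. -/
theorem stmt16 (n : ℕ) (hn : 2 ≤ n) (c : ℝ)
    (hc : c < ‖1 - Complex.exp (π * (1 - 1 / (n : ℂ)) * Complex.I)‖)
    {F : Type*} [Fintype F] (z : F → ℂ) (hz : ∀ γ : F, ‖z γ‖ = 1) :
    Nat.card {ψ : F → ℂ // (∀ γ : F, ψ γ ^ n = 1) ∧ ∀ γ : F, ‖z γ - ψ γ‖ ≤ c}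
        ≤ (n - 1) ^ (Fintype.card F) ∧
    ∀ (N : ℕ) (zs : Fin N → F → ℂ), (∀ j γ, ‖zs j γ‖ = 1) →
      (∀ ψ : F → ℂ, (∀ γ : F, ψ γ ^ n = 1) →
        ∃ j, ∀ γ : F, ‖zs j γ - ψ γ‖ ≤ c) →
      ((n : ℝ) / (n - 1)) ^ (Fintype.card F) ≤ N := by
  classical
  have hnpos : 0 < n := by omega
  refine ⟨main_card n hn c hc z hz, ?_⟩
  intro N zs hzs hcov
  set W : Finset (F → ℂ) := Fintype.piFinset (fun _ : F => Polynomial.nthRootsFinset n (1 : ℂ)) with hW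
  have hWcard : W.card = n ^ Fintype.card F := by
    rw [hW, Fintype.card_piFinset]
    simp [(Complex.isPrimitiveRoot_exp n (by omega)).card_nthRootsFinset]
  set A : Fin N → Finset (F → ℂ) := fun j => Fintype.piFinset
    (fun γ => (Polynomial.nthRootsFinset n (1 : ℂ)).filter
      (fun ψ => ‖zs j γ - ψ‖ ≤ c)) with hA
  have hsub : W ⊆ Finset.univ.biUnion A := by
    intro ψ hψ
    rw [hW, Fintype.mem_piFinset] at hψ
    have hψ' : ∀ γ, ψ γ ^ n = 1 := fun γ =>
      (Polynomial.mem_nthRootsFinset hnpos (1 : ℂ)).mp (hψ γ)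
    obtain ⟨j, hj⟩ := hcov ψ hψ'
    refine Finset.mem_biUnion.mpr ⟨j, Finset.mem_univ j, ?_⟩
    rw [hA, Fintype.mem_piFinset]
    intro γ
    rw [Finset.mem_filter, Polynomial.mem_nthRootsFinset hnpos]
    exact ⟨hψ' γ, hj γ⟩
  have hN : n ^ Fintype.card F ≤ N * (n-1) ^ (Fintype.card F) := by
    calc n ^ Fintype.card F = W.card := hWcard.symm
      _ ≤ (Finset.univ.biUnion A).card := Finset.card_le_card hsub
      _ ≤ ∑ j, (A j).card := Finset.card_biUnion_le
      _ ≤ ∑ _j : Fin N, (n-1) ^ (Fintype.card F) :=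
          Finset.sum_le_sum (fun j _ => piA_card n hn c hc (zs j) (hzs j))
      _ = N * (n-1) ^ (Fintype.card F) := by
          rw [Finset.sum_const, Finset.card_univ, Fintype.card_fin, smul_eq_mul]
  have h1 : (0:ℝ) < (n:ℝ) - 1 := by
    have : (2:ℝ) ≤ n := by exact_mod_cast hn
    linarith
  rw [div_pow, div_le_iff₀ (by positivity)]
  have hcast := (Nat.cast_le (α := ℝ)).mpr hN
  rw [Nat.cast_mul, Nat.cast_pow, Nat.cast_pow, Nat.cast_sub (by omega : 1 ≤ n),
    Nat.cast_one] at hcast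
  exact hcast
end

section
/- Let G be a compact abelian group with dual group Γ and let E ⊆ Γ. If E is ε-Kronecker for some ε < 1, then E is an I₀ set: every bounded function φ : E → ℂ is the restriction to E of the Fourier–Stieltjes transform of a discrete measure on G. -/
open Complex

/-- Every complex number is its modulus times a point on the unit circle. -/
lemma exists_circle_dir (z : ℂ) : ∃ u : Circle, ((‖z‖ : ℝ) : ℂ) * u = z := by
  by_cases h : z = 0
  · exact ⟨1, by simp [h]⟩
  · refine ⟨⟨z / (‖z‖ : ℝ), ?_⟩, ?_⟩
    · show _ ∈ Metric.sphere (0 : ℂ) 1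
      rw [mem_sphere_zero_iff_norm]
      simp [norm_div, norm_ne_zero_iff.mpr h]
    · have h0 : ((‖z‖ : ℝ) : ℂ) ≠ 0 := by
        simpa using h
      field_simp

/-- On the circle, inversion is an isometry for differences. -/
lemma circle_abs_inv_sub_inv (a b : Circle) :
    ‖(a : ℂ)⁻¹ - (b : ℂ)⁻¹‖ = ‖(a : ℂ) - (b : ℂ)‖ := by
  rw [inv_sub_inv a.coe_ne_zero b.coe_ne_zero, norm_div, norm_mul, Circle.norm_coe, Circle.norm_coe, mul_one, div_one,
    norm_sub_rev]

/-- One step of the interpolation: approximate a function bounded by `D` on `E`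
by a single atom of mass `D/2`, shrinking the bound by the factor `(1+ε)/2`. -/
lemma kronecker_step {G : Type*} [CommGroup G] [TopologicalSpace G]
    (E : Set (ContinuousMonoidHom G Circle)) (ε : ℝ)
    (hK : ∀ φ : ContinuousMonoidHom G Circle → Circle,
      ∃ x : G, ∀ γ ∈ E, ‖(φ γ : ℂ) - (γ x : ℂ)‖ < ε)
    (ψ : ContinuousMonoidHom G Circle → ℂ) (D : ℝ) :
    ∃ x : G, (0 ≤ D ∧ ∀ γ ∈ E, ‖ψ γ‖ ≤ D) →
      ∀ γ ∈ E, ‖ψ γ - ((D / 2 : ℝ) : ℂ) * ((γ x⁻¹ : Circle) : ℂ)‖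
        ≤ (1 + ε) / 2 * D := by
  choose u hu using fun γ => exists_circle_dir (ψ γ)
  obtain ⟨x, hx⟩ := hK (fun γ => (u γ)⁻¹)
  refine ⟨x, fun ⟨hD, hb⟩ γ hγ => ?_⟩
  have hcoe : ((γ x⁻¹ : Circle) : ℂ) = ((γ x : ℂ))⁻¹ := by
    rw [map_inv, Circle.coe_inv]
  have h1 : ‖(u γ : ℂ) - ((γ x⁻¹ : Circle) : ℂ)‖ < ε := by
    have := hx γ hγ
    have h2 := circle_abs_inv_sub_inv (u γ)⁻¹ (γ x)
    rw [Circle.coe_inv, inv_inv] at h2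
    rw [hcoe, h2]
    simpa [Circle.coe_inv] using this
  set r := ‖ψ γ‖ with hr
  have hr0 : 0 ≤ r := norm_nonneg _
  have hrD : r ≤ D := hb γ hγ
  have key : ψ γ - ((D / 2 : ℝ) : ℂ) * ((γ x⁻¹ : Circle) : ℂ)
      = ((r - D / 2 : ℝ) : ℂ) * (u γ : ℂ)
        + ((D / 2 : ℝ) : ℂ) * ((u γ : ℂ) - ((γ x⁻¹ : Circle) : ℂ)) := by
    rw [← hu γ]; push_cast; ring
  rw [key]
  calc ‖_‖ ≤ ‖((r - D / 2 : ℝ) : ℂ) * (u γ : ℂ)‖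
        + ‖((D / 2 : ℝ) : ℂ) * ((u γ : ℂ) - ((γ x⁻¹ : Circle) : ℂ))‖ :=
        norm_add_le _ _
    _ = |r - D / 2| + |D / 2| * ‖(u γ : ℂ) - ((γ x⁻¹ : Circle) : ℂ)‖ := by
        rw [norm_mul, norm_mul, Complex.norm_real, Complex.norm_real, Real.norm_eq_abs,
          Real.norm_eq_abs, Circle.norm_coe, mul_one]
    _ ≤ D / 2 + D / 2 * ε := by
        have e1 : |r - D / 2| ≤ D / 2 := by rw [abs_le]; constructor <;> linarith
        have e2 : |D / 2| = D / 2 := _root_.abs_of_nonneg (by linarith)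
        rw [e2]
        exact add_le_add e1 (mul_le_mul_of_nonneg_left h1.le (by linarith))
    _ = (1 + ε) / 2 * D := by ring

/-- The sequence of residual functions in the iterative interpolation. -/
noncomputable def kroneckerResid {G : Type*} [CommGroup G] [TopologicalSpace G]
    (xf : ((ContinuousMonoidHom G Circle) → ℂ) → ℝ → G) (ρ C : ℝ)
    (φ : ContinuousMonoidHom G Circle → ℂ) :
    ℕ → (ContinuousMonoidHom G Circle → ℂ)
  | 0 => φ
  | n + 1 => fun γ => kroneckerResid xf ρ C φ n γ -
      ((C * ρ ^ n / 2 : ℝ) : ℂ) *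
        ((γ (xf (kroneckerResid xf ρ C φ n) (C * ρ ^ n))⁻¹ : Circle) : ℂ)

/-- If `E` is `ε`-Kronecker for some `ε < 1`, then `E` is an `I₀` set: every bounded
function `φ : E → ℂ` is interpolated by the Fourier–Stieltjes transform
`γ ↦ ∑ᵢ cᵢ γ(xᵢ⁻¹)` of a discrete measure `∑ᵢ cᵢ δ_{xᵢ}` on `G` with `∑ᵢ |cᵢ| < ∞`. -/
theorem stmt18 {G : Type*} [CommGroup G] [TopologicalSpace G] [IsTopologicalGroup G]
    [CompactSpace G] (E : Set (ContinuousMonoidHom G Circle)) (ε : ℝ) (hε : ε < 1)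
    (hK : ∀ φ : ContinuousMonoidHom G Circle → Circle,
      ∃ x : G, ∀ γ ∈ E, ‖(φ γ : ℂ) - (γ x : ℂ)‖ < ε) :
    ∀ φ : ContinuousMonoidHom G Circle → ℂ,
      (∃ C : ℝ, ∀ γ ∈ E, ‖φ γ‖ ≤ C) →
        ∃ (c : ℕ → ℂ) (x : ℕ → G), Summable (fun i => ‖c i‖) ∧
          ∀ γ ∈ E, ∑' i : ℕ, c i * ((γ (x i)⁻¹ : Circle) : ℂ) = φ γ := by
  intro φ hφ
  obtain ⟨C, hC⟩ := hφ
  rcases E.eq_empty_or_nonempty with hE | ⟨γ0, hγ0⟩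
  · refine ⟨0, fun _ => 1, by simpa using summable_zero, ?_⟩
    intro γ hγ
    rw [hE] at hγ
    exact absurd hγ (Set.notMem_empty γ)
  -- `ε > 0` since `E` is nonempty
  have hε0 : 0 < ε := by
    obtain ⟨x, hx⟩ := hK fun _ => 1
    exact lt_of_le_of_lt (norm_nonneg _) (hx γ0 hγ0)
  have hC0 : 0 ≤ C := le_trans (norm_nonneg _) (hC γ0 hγ0)
  set ρ : ℝ := (1 + ε) / 2 with hρdef
  have hρ0 : 0 ≤ ρ := by positivity
  have hρ1 : ρ < 1 := by rw [hρdef]; linarith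
  choose xf hxf using kronecker_step E ε hK
  set F := kroneckerResid xf ρ C φ with hFdef
  set xs : ℕ → G := fun n => xf (F n) (C * ρ ^ n) with hxs
  set cs : ℕ → ℂ := fun n => ((C * ρ ^ n / 2 : ℝ) : ℂ) with hcs
  have hFzero : F 0 = φ := rfl
  have hFsucc : ∀ n γ, F (n + 1) γ = F n γ - cs n * ((γ (xs n)⁻¹ : Circle) : ℂ) :=
    fun n γ => rfl
  -- bound on the residuals
  have hbound : ∀ n, ∀ γ ∈ E, ‖F n γ‖ ≤ C * ρ ^ n := by
    intro n
    induction n with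
    | zero => simpa [hFzero] using hC
    | succ n ih =>
      intro γ hγ
      have h := hxf (F n) (C * ρ ^ n)
        ⟨mul_nonneg hC0 (pow_nonneg hρ0 n), ih⟩ γ hγ
      rw [hFsucc n γ]
      calc ‖F n γ - cs n * ((γ (xs n)⁻¹ : Circle) : ℂ)‖
          ≤ (1 + ε) / 2 * (C * ρ ^ n) := h
        _ = C * ρ ^ (n + 1) := by rw [hρdef]; ring
  -- partial sums telescope
  have hpartial : ∀ γ, ∀ n,
      ∑ k ∈ Finset.range n, cs k * ((γ (xs k)⁻¹ : Circle) : ℂ) = φ γ - F n γ := by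
    intro γ n
    induction n with
    | zero => simp [hFzero]
    | succ n ih =>
      rw [Finset.sum_range_succ, ih, hFsucc n γ]
      ring
  -- summability
  have habs : ∀ n, ‖cs n‖ = C / 2 * ρ ^ n := by
    intro n
    rw [hcs]
    rw [Complex.norm_real, Real.norm_eq_abs, _root_.abs_of_nonneg (by positivity)]
    ring
  have hsum : Summable fun i => ‖cs i‖ := by
    refine ((summable_geometric_of_lt_one hρ0 hρ1).mul_left (C / 2)).congr fun i => ?_
    rw [habs]
  refine ⟨cs, xs, hsum, ?_⟩
  intro γ hγ
  have hsummable : Summable fun n => cs n * ((γ (xs n)⁻¹ : Circle) : ℂ) := by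
    refine Summable.of_norm (hsum.congr fun n => ?_)
    rw [norm_mul, Circle.norm_coe, mul_one]
  have h1 : Filter.Tendsto
      (fun n => ∑ k ∈ Finset.range n, cs k * ((γ (xs k)⁻¹ : Circle) : ℂ))
      Filter.atTop (nhds (∑' n, cs n * ((γ (xs n)⁻¹ : Circle) : ℂ))) :=
    hsummable.hasSum.tendsto_sum_nat
  have hF0 : Filter.Tendsto (fun n => F n γ) Filter.atTop (nhds 0) := by
    refine squeeze_zero_norm (fun n => hbound n γ hγ) ?_
    have := (tendsto_pow_atTop_nhds_zero_of_lt_one hρ0 hρ1).const_mul C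
    simpa using this
  have h2 : Filter.Tendsto
      (fun n => ∑ k ∈ Finset.range n, cs k * ((γ (xs k)⁻¹ : Circle) : ℂ))
      Filter.atTop (nhds (φ γ)) := by
    have : Filter.Tendsto (fun n => φ γ - F n γ) Filter.atTop (nhds (φ γ - 0)) :=
      tendsto_const_nhds.sub hF0
    rw [sub_zero] at this
    exact (Filter.tendsto_congr fun n => (hpartial γ n).symm).mp this
  exact tendsto_nhds_unique h1 h2
end
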